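/- For the rotational surface of hyperbolic type X, for all t ∈ I and θ ∈ ℝ: ⟨X(t,θ), X(t,θ)⟩_L = −1 and the first component of X(t,θ) is positive (so X takes values in H³); moreover ⟨∂X/∂t, ∂X/∂t⟩_L = 1 (t is hyperbolic arc length), ⟨∂X/∂t, ∂X/∂θ⟩_L = 0, and ⟨∂X/∂θ, ∂X/∂θ⟩_L = x₁(t)², i.e., the induced first fundamental form is diag(1, x₁²). -/

import Mathlib

open Set

/-- The Lorentzian inner product on `ℝ⁴`. -/
noncomputable def lor (p q : ℝ × ℝ × ℝ × ℝ) : ℝ :=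
  -(p.1 * q.1) + p.2.1 * q.2.1 + p.2.2.1 * q.2.2.1 + p.2.2.2 * q.2.2.2

/-- `φ(t) = ∫₀ᵗ √(−1 + x₁² − x₁'²)/(x₁² − 1) dσ` for the hyperbolic-type rotational surface. -/
noncomputable def hypPhi (x₁ : ℝ → ℝ) (t : ℝ) : ℝ :=
  ∫ σ in (0:ℝ)..t, Real.sqrt (-1 + x₁ σ ^ 2 - deriv x₁ σ ^ 2) / (x₁ σ ^ 2 - 1)

/-- The rotational surface of hyperbolic type
`X(t,θ) = (x₁ cosh θ, x₁ sinh θ, √(x₁²−1)·cos φ, √(x₁²−1)·sin φ)`. -/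
noncomputable def hypX (x₁ : ℝ → ℝ) (t θ : ℝ) : ℝ × ℝ × ℝ × ℝ :=
  (x₁ t * Real.cosh θ, x₁ t * Real.sinh θ,
   Real.sqrt (x₁ t ^ 2 - 1) * Real.cos (hypPhi x₁ t),
   Real.sqrt (x₁ t ^ 2 - 1) * Real.sin (hypPhi x₁ t))

/-- The rotational surface of hyperbolic type lies in `H³`, `t` is hyperbolic arc length,
and the induced first fundamental form is `diag(1, x₁²)`. -/
private lemma hyp_alg (A A' R S c s ch sh : ℝ) (hR0 : R ≠ 0) (hR : R^2 = A^2-1)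
    (hS : S^2 = -1+A^2-A'^2) (hcs : s^2+c^2 = 1) (hch : ch^2-sh^2 = 1) :
    -(A'*ch*(A'*ch)) + A'*sh*(A'*sh)
      + (2*A^1*A'/(2*R)*c + R*(-s*(S/(A^2-1))))*(2*A^1*A'/(2*R)*c + R*(-s*(S/(A^2-1))))
      + (2*A^1*A'/(2*R)*s + R*(c*(S/(A^2-1))))*(2*A^1*A'/(2*R)*s + R*(c*(S/(A^2-1)))) = 1 := by
  rw [← hR]
  field_simp
  linear_combination ((-(A'^2)*R^2)*hch + (A^2*A'^2+S^2)*hcs + hS + (-(A'^2)-1)*hR)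

theorem stmt_7 (a b : ℝ) (h0 : (0:ℝ) ∈ Ioo a b) (x₁ : ℝ → ℝ)
    (hx₁ : ContDiffOn ℝ 2 x₁ (Ioo a b))
    (hbig : ∀ t ∈ Ioo a b, 1 < x₁ t)
    (hQ : ∀ t ∈ Ioo a b, 0 < -1 + x₁ t ^ 2 - deriv x₁ t ^ 2) :
    ∀ t ∈ Ioo a b, ∀ θ : ℝ,
      lor (hypX x₁ t θ) (hypX x₁ t θ) = -1 ∧
      0 < (hypX x₁ t θ).1 ∧
      lor (deriv (fun s => hypX x₁ s θ) t) (deriv (fun s => hypX x₁ s θ) t) = 1 ∧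
      lor (deriv (fun s => hypX x₁ s θ) t) (deriv (fun ψ => hypX x₁ t ψ) θ) = 0 ∧
      lor (deriv (fun ψ => hypX x₁ t ψ) θ) (deriv (fun ψ => hypX x₁ t ψ) θ) = x₁ t ^ 2 := by
  intro t ht θ
  -- basic facts
  have hA1 : 1 < x₁ t := hbig t ht
  have hA0 : (0:ℝ) < x₁ t := by linarith
  have hR2pos : (0:ℝ) < x₁ t ^ 2 - 1 := by nlinarith
  have hRne : x₁ t ^ 2 - 1 ≠ 0 := ne_of_gt hR2pos
  have hRpos : 0 < Real.sqrt (x₁ t ^ 2 - 1) := Real.sqrt_pos.mpr hR2pos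
  have hR2 : Real.sqrt (x₁ t ^ 2 - 1) ^ 2 = x₁ t ^ 2 - 1 := Real.sq_sqrt hR2pos.le
  have hQt := hQ t ht
  have hS2 : Real.sqrt (-1 + x₁ t ^ 2 - deriv x₁ t ^ 2) ^ 2
      = -1 + x₁ t ^ 2 - deriv x₁ t ^ 2 := Real.sq_sqrt hQt.le
  -- differentiability of x₁ at t
  have hA : HasDerivAt x₁ (deriv x₁ t) t := by
    have := (hx₁.differentiableOn (by norm_num)).differentiableAt (isOpen_Ioo.mem_nhds ht)
    exact this.hasDerivAt
  -- continuity of the integrand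
  set f : ℝ → ℝ := fun σ => Real.sqrt (-1 + x₁ σ ^ 2 - deriv x₁ σ ^ 2) / (x₁ σ ^ 2 - 1) with hf
  have hcx : ContinuousOn x₁ (Ioo a b) := hx₁.continuousOn
  have hcd : ContinuousOn (deriv x₁) (Ioo a b) :=
    hx₁.continuousOn_deriv_of_isOpen isOpen_Ioo (by norm_num)
  have hcf : ContinuousOn f (Ioo a b) := by
    apply ContinuousOn.div
    · exact ((continuousOn_const.add (hcx.pow 2)).sub (hcd.pow 2)).sqrt
    · exact (hcx.pow 2).sub continuousOn_const
    · intro σ hσ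
      have := hbig σ hσ; nlinarith
  -- derivative of hypPhi
  have hsub : uIcc (0:ℝ) t ⊆ Ioo a b := (ordConnected_Ioo).uIcc_subset h0 ht
  have hint : IntervalIntegrable f MeasureTheory.volume 0 t :=
    (hcf.mono hsub).intervalIntegrable
  have hφ : HasDerivAt (hypPhi x₁) (f t) t := by
    have := intervalIntegral.integral_hasDerivAt_right hint
      (hcf.stronglyMeasurableAtFilter isOpen_Ioo t ht)
      (hcf.continuousAt (isOpen_Ioo.mem_nhds ht))
    exact this
  -- derivative of R := sqrt (x₁^2 - 1)
  have hpoly : HasDerivAt (fun s => x₁ s ^ 2 - 1)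
      (2 * x₁ t ^ 1 * deriv x₁ t) t := by
    simpa using ((hA.pow 2).sub_const 1)
  have hR : HasDerivAt (fun s => Real.sqrt (x₁ s ^ 2 - 1))
      (2 * x₁ t ^ 1 * deriv x₁ t / (2 * Real.sqrt (x₁ t ^ 2 - 1))) t :=
    hpoly.sqrt hRne
  -- t-derivatives of the four components
  have h1 : HasDerivAt (fun s => x₁ s * Real.cosh θ) (deriv x₁ t * Real.cosh θ) t :=
    hA.mul_const _
  have h2 : HasDerivAt (fun s => x₁ s * Real.sinh θ) (deriv x₁ t * Real.sinh θ) t :=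
    hA.mul_const _
  have h3 : HasDerivAt (fun s => Real.sqrt (x₁ s ^ 2 - 1) * Real.cos (hypPhi x₁ s))
      (2 * x₁ t ^ 1 * deriv x₁ t / (2 * Real.sqrt (x₁ t ^ 2 - 1)) * Real.cos (hypPhi x₁ t)
        + Real.sqrt (x₁ t ^ 2 - 1) * (-Real.sin (hypPhi x₁ t) * f t)) t :=
    hR.mul hφ.cos
  have h4 : HasDerivAt (fun s => Real.sqrt (x₁ s ^ 2 - 1) * Real.sin (hypPhi x₁ s))
      (2 * x₁ t ^ 1 * deriv x₁ t / (2 * Real.sqrt (x₁ t ^ 2 - 1)) * Real.sin (hypPhi x₁ t)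
        + Real.sqrt (x₁ t ^ 2 - 1) * (Real.cos (hypPhi x₁ t) * f t)) t :=
    hR.mul hφ.sin
  have hXt : HasDerivAt (fun s => hypX x₁ s θ)
      (deriv x₁ t * Real.cosh θ, deriv x₁ t * Real.sinh θ,
       2 * x₁ t ^ 1 * deriv x₁ t / (2 * Real.sqrt (x₁ t ^ 2 - 1)) * Real.cos (hypPhi x₁ t)
        + Real.sqrt (x₁ t ^ 2 - 1) * (-Real.sin (hypPhi x₁ t) * f t),
       2 * x₁ t ^ 1 * deriv x₁ t / (2 * Real.sqrt (x₁ t ^ 2 - 1)) * Real.sin (hypPhi x₁ t)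
        + Real.sqrt (x₁ t ^ 2 - 1) * (Real.cos (hypPhi x₁ t) * f t)) t :=
    h1.prodMk (h2.prodMk (h3.prodMk h4))
  -- θ-derivative
  have hXθ : HasDerivAt (fun ψ => hypX x₁ t ψ)
      (x₁ t * Real.sinh θ, x₁ t * Real.cosh θ, 0, 0) θ := by
    have g1 : HasDerivAt (fun ψ => x₁ t * Real.cosh ψ) (x₁ t * Real.sinh θ) θ :=
      (Real.hasDerivAt_cosh θ).const_mul _
    have g2 : HasDerivAt (fun ψ => x₁ t * Real.sinh ψ) (x₁ t * Real.cosh θ) θ :=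
      (Real.hasDerivAt_sinh θ).const_mul _
    exact g1.prodMk (g2.prodMk ((hasDerivAt_const _ _).prodMk (hasDerivAt_const _ _)))
  rw [hXt.deriv, hXθ.deriv]
  have hch : Real.cosh θ ^ 2 - Real.sinh θ ^ 2 = 1 := Real.cosh_sq_sub_sinh_sq θ
  have hsc : Real.sin (hypPhi x₁ t) ^ 2 + Real.cos (hypPhi x₁ t) ^ 2 = 1 :=
    Real.sin_sq_add_cos_sq _
  have hfdef : f t = Real.sqrt (-1 + x₁ t ^ 2 - deriv x₁ t ^ 2) / (x₁ t ^ 2 - 1) := rfl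
  refine ⟨?_, ?_, ?_, ?_, ?_⟩
  · simp only [lor, hypX]
    nlinarith [hR2, hch, hsc]
  · simp only [hypX]
    positivity
  · simp only [lor, hfdef]
    have hRne' : Real.sqrt (x₁ t ^ 2 - 1) ≠ 0 := ne_of_gt hRpos
    exact hyp_alg (x₁ t) (deriv x₁ t) (Real.sqrt (x₁ t ^ 2 - 1))
      (Real.sqrt (-1 + x₁ t ^ 2 - deriv x₁ t ^ 2)) (Real.cos (hypPhi x₁ t))
      (Real.sin (hypPhi x₁ t)) (Real.cosh θ) (Real.sinh θ) hRne' hR2 hS2 hsc hch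
  · simp only [lor]
    ring
  · simp only [lor]
    nlinarith [hch]
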